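/- Let h be a random nonzero vector in C^N, W ∈ C^{N×K} with orthonormal columns, Π_W = W W^H, and H a finite set of unit vectors in the range of Π_W. Then the total quantization distortion D_H := E_h[ min_{ĥ∈H} d²(h, ĥ) ] equals E_h[ ‖h̃_∥‖² · min_{ĥ∈H} d²(h_∥, ĥ) ] + d_p(W, R̃), where h_∥ = Π_W h, h̃_∥ = h_∥/‖h‖, R̃ = E_h[ h h^H/‖h‖² ], and d_p(W, R̃) = 1 − Tr(Π_W R̃). -/

import Mathlib

open Matrix MeasureTheory

/-- Squared Euclidean norm of a complex vector. -/
noncomputable def nsq {n : ℕ} (x : Fin n → ℂ) : ℝ := (star x ⬝ᵥ x).re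

/-- Squared chordal distance between two (nonzero) complex vectors. -/
noncomputable def chordalSq {n : ℕ} (x y : Fin n → ℂ) : ℝ :=
  1 - ‖star x ⬝ᵥ y‖ ^ 2 / (nsq x * nsq y)

/-- Covariance of the normalized directions `h/‖h‖` under the distribution `μ`. -/
noncomputable def dirCov {N : ℕ} (μ : Measure (Fin N → ℂ)) :
    Matrix (Fin N) (Fin N) ℂ :=
  Matrix.of fun i j => ∫ h, h i * star (h j) / (nsq h : ℂ) ∂μ

/- ### Auxiliary lemmas -/

lemma nsq_eq_sum {n : ℕ} (x : Fin n → ℂ) : nsq x = ∑ i, Complex.normSq (x i) := by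
  simp [nsq, dotProduct, Complex.re_sum, mul_comm, Complex.mul_conj]

lemma nsq_nonneg {n : ℕ} (x : Fin n → ℂ) : 0 ≤ nsq x := by
  rw [nsq_eq_sum]; exact Finset.sum_nonneg fun i _ => Complex.normSq_nonneg _

lemma nsq_pos {n : ℕ} {x : Fin n → ℂ} (hx : x ≠ 0) : 0 < nsq x := by
  rcases (Function.ne_iff).1 hx with ⟨i, hi⟩
  rw [nsq_eq_sum]
  exact Finset.sum_pos' (fun j _ => Complex.normSq_nonneg _)
    ⟨i, Finset.mem_univ _, Complex.normSq_pos.2 hi⟩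

lemma dot_star_self {n : ℕ} (x : Fin n → ℂ) : star x ⬝ᵥ x = (nsq x : ℂ) := by
  rw [nsq_eq_sum]
  simp [dotProduct, mul_comm, Complex.mul_conj]

lemma cs {n : ℕ} (x y : Fin n → ℂ) :
    ‖star x ⬝ᵥ y‖ ^ 2 ≤ nsq x * nsq y := by
  have h := norm_inner_le_norm (𝕜 := ℂ) ((WithLp.equiv 2 (Fin n → ℂ)).symm x)
    ((WithLp.equiv 2 (Fin n → ℂ)).symm y)
  rw [show inner ℂ ((WithLp.equiv 2 (Fin n → ℂ)).symm x) ((WithLp.equiv 2 (Fin n → ℂ)).symm y)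
      = star x ⬝ᵥ y from by rw [dotProduct_comm]; rfl] at h
  have hx : ‖(WithLp.equiv 2 (Fin n → ℂ)).symm x‖ ^ 2 = nsq x := by
    rw [EuclideanSpace.norm_eq, Real.sq_sqrt (Finset.sum_nonneg fun i _ => sq_nonneg _),
      nsq_eq_sum]
    simp [Complex.sq_norm]
  have hy : ‖(WithLp.equiv 2 (Fin n → ℂ)).symm y‖ ^ 2 = nsq y := by
    rw [EuclideanSpace.norm_eq, Real.sq_sqrt (Finset.sum_nonneg fun i _ => sq_nonneg _),
      nsq_eq_sum]
    simp [Complex.sq_norm]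
  calc ‖star x ⬝ᵥ y‖ ^ 2
      ≤ (‖(WithLp.equiv 2 (Fin n → ℂ)).symm x‖ * ‖(WithLp.equiv 2 (Fin n → ℂ)).symm y‖) ^ 2 :=
        pow_le_pow_left₀ (norm_nonneg _) h 2
    _ = nsq x * nsq y := by rw [mul_pow, hx, hy]

lemma chordalSq_le_one {n : ℕ} (x y : Fin n → ℂ) : chordalSq x y ≤ 1 := by
  have : 0 ≤ ‖star x ⬝ᵥ y‖ ^ 2 / (nsq x * nsq y) :=
    div_nonneg (sq_nonneg _) (mul_nonneg (nsq_nonneg x) (nsq_nonneg y))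
  unfold chordalSq; linarith

lemma chordalSq_nonneg {n : ℕ} (x y : Fin n → ℂ) : 0 ≤ chordalSq x y := by
  unfold chordalSq
  rcases eq_or_lt_of_le (mul_nonneg (nsq_nonneg x) (nsq_nonneg y)) with h | h
  · rw [← h, div_zero]; norm_num
  · have := div_le_one_of_le₀ (cs x y) h.le
    linarith

lemma projH {N K : ℕ} (W : Matrix (Fin N) (Fin K) ℂ) : (W * Wᴴ)ᴴ = W * Wᴴ := by
  simp [Matrix.conjTranspose_mul]

lemma projIdem {N K : ℕ} (W : Matrix (Fin N) (Fin K) ℂ) (hW : Wᴴ * W = 1) :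
    (W * Wᴴ) * (W * Wᴴ) = W * Wᴴ := by
  calc W * Wᴴ * (W * Wᴴ) = W * (Wᴴ * W) * Wᴴ := by simp [Matrix.mul_assoc]
    _ = W * Wᴴ := by rw [hW, Matrix.mul_one]

lemma dot_proj {n : ℕ} (P : Matrix (Fin n) (Fin n) ℂ) (hP : Pᴴ = P) (x y : Fin n → ℂ) :
    star (P.mulVec x) ⬝ᵥ y = star x ⬝ᵥ P.mulVec y := by
  rw [Matrix.star_mulVec, hP, ← Matrix.dotProduct_mulVec]

lemma dot_proj_self {n : ℕ} (P : Matrix (Fin n) (Fin n) ℂ) (hP : Pᴴ = P) (hPP : P * P = P)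
    (x : Fin n → ℂ) :
    star (P.mulVec x) ⬝ᵥ (P.mulVec x) = star x ⬝ᵥ P.mulVec x := by
  rw [dot_proj P hP, Matrix.mulVec_mulVec, hPP]

lemma nsq_proj_le {n : ℕ} (P : Matrix (Fin n) (Fin n) ℂ) (hP : Pᴴ = P) (hPP : P * P = P)
    (x : Fin n → ℂ) : nsq (P.mulVec x) ≤ nsq x := by
  have h1 : star (P.mulVec x) ⬝ᵥ x = star x ⬝ᵥ P.mulVec x := dot_proj P hP x x
  have key : star (x - P.mulVec x) ⬝ᵥ (x - P.mulVec x)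
      = star x ⬝ᵥ x - star (P.mulVec x) ⬝ᵥ (P.mulVec x) := by
    simp only [star_sub, sub_dotProduct, dotProduct_sub]
    rw [dot_proj_self P hP hPP, h1]; ring
  have h2 : nsq x - nsq (P.mulVec x) = nsq (x - P.mulVec x) := by
    unfold nsq; rw [key, Complex.sub_re]
  linarith [nsq_nonneg (x - P.mulVec x)]

lemma inf'_affine {ι : Type*} (s : Finset ι) (hs : s.Nonempty) (f : ι → ℝ) (a b : ℝ)
    (ha : 0 ≤ a) : s.inf' hs (fun i => a * f i + b) = a * s.inf' hs f + b := by
  obtain ⟨i, hi, hfi⟩ := Finset.exists_mem_eq_inf' hs f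
  obtain ⟨j, hj, hgj⟩ := Finset.exists_mem_eq_inf' hs (fun i => a * f i + b)
  apply le_antisymm
  · rw [hfi]; exact Finset.inf'_le _ hi
  · rw [hgj]
    have h1 : s.inf' hs f ≤ f j := Finset.inf'_le _ hj
    nlinarith

lemma meas_inf' {ι α : Type*} [MeasurableSpace α] (s : Finset ι) (hs : s.Nonempty)
    (f : ι → α → ℝ) (hf : ∀ i, Measurable (f i)) :
    Measurable fun x => s.inf' hs fun i => f i x := by
  induction hs using Finset.Nonempty.cons_induction with
  | singleton i => simpa using hf i
  | cons i t hi ht ih =>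
      have : (fun x => (Finset.cons i t hi).inf' (Finset.cons_nonempty hi) fun c => f c x)
          = fun x => min (f i x) (t.inf' ht fun c => f c x) := by
        funext x; rw [Finset.inf'_cons]
      rw [this]
      exact (hf i).min ih

lemma meas_nsq {n : ℕ} : Measurable (nsq : (Fin n → ℂ) → ℝ) := by
  unfold nsq dotProduct
  fun_prop

lemma meas_mulVec {n : ℕ} (P : Matrix (Fin n) (Fin n) ℂ) :
    Measurable fun x : Fin n → ℂ => P.mulVec x := by
  unfold Matrix.mulVec dotProduct
  fun_prop

lemma meas_chordal {n : ℕ} (c : Fin n → ℂ) :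
    Measurable fun x : Fin n → ℂ => chordalSq x c := by
  unfold chordalSq
  apply Measurable.const_sub
  apply Measurable.div
  · apply Measurable.pow_const
    apply continuous_norm.measurable.comp
    unfold dotProduct; fun_prop
  · exact (meas_nsq.mul_const _)

lemma sq_abs_apply_le_nsq {n : ℕ} (i : Fin n) (h : Fin n → ℂ) :
    ‖h i‖ ^ 2 ≤ nsq h := by
  rw [nsq_eq_sum, Complex.sq_norm]
  exact Finset.single_le_sum (f := fun k => Complex.normSq (h k))
    (fun k _ => Complex.normSq_nonneg _) (Finset.mem_univ i)

/-- Proposition 1: the total quantization distortion splits into the in-subspace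
distortion and the projection distortion `d_p(W,R̃)`. -/
theorem distortion_partition {N K : ℕ}
    (μ : Measure (Fin N → ℂ)) [IsProbabilityMeasure μ]
    (W : Matrix (Fin N) (Fin K) ℂ) (hW : Wᴴ * W = 1)
    (H : Finset (Fin N → ℂ)) (hne : H.Nonempty)
    (hcode : ∀ c ∈ H, nsq c = 1 ∧ (W * Wᴴ).mulVec c = c)
    (hnz : ∀ᵐ h ∂μ, h ≠ 0 ∧ (W * Wᴴ).mulVec h ≠ 0) :
    (∫ h, H.inf' hne (fun c => chordalSq h c) ∂μ)
      = (∫ h, (nsq ((W * Wᴴ).mulVec h) / nsq h)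
            * H.inf' hne (fun c => chordalSq ((W * Wᴴ).mulVec h) c) ∂μ)
        + (1 - ((W * Wᴴ * dirCov μ).trace).re) := by
  set P : Matrix (Fin N) (Fin N) ℂ := W * Wᴴ with hPdef
  have hP : Pᴴ = P := projH W
  have hPP : P * P = P := projIdem W hW
  obtain ⟨c0, hc0⟩ := hne
  -- the ratio function
  set g : (Fin N → ℂ) → ℝ := fun h => nsq (P.mulVec h) / nsq h with hgdef
  have hg01 : ∀ h, 0 ≤ g h ∧ g h ≤ 1 := by
    intro h
    constructor
    · exact div_nonneg (nsq_nonneg _) (nsq_nonneg _)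
    · rcases eq_or_lt_of_le (nsq_nonneg h) with h0 | h0
      · simp [hgdef, ← h0]
      · exact div_le_one_of_le₀ (nsq_proj_le P hP hPP h) h0.le
  -- pointwise a.e. identity
  have keyae : ∀ᵐ h ∂μ, (H.inf' ⟨c0, hc0⟩ fun c => chordalSq h c)
      = g h * (H.inf' ⟨c0, hc0⟩ fun c => chordalSq (P.mulVec h) c) + (1 - g h) := by
    filter_upwards [hnz] with h hh
    obtain ⟨h0, hp0⟩ := hh
    have hnh : 0 < nsq h := nsq_pos h0
    have hnp : 0 < nsq (P.mulVec h) := nsq_pos hp0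
    have hcongr : ∀ c ∈ H, chordalSq h c = g h * chordalSq (P.mulVec h) c + (1 - g h) := by
      intro c hc
      obtain ⟨hc1, hc2⟩ := hcode c hc
      have hdot : star h ⬝ᵥ c = star (P.mulVec h) ⬝ᵥ c := by
        rw [dot_proj P hP, hc2]
      unfold chordalSq
      rw [hdot, hc1, hgdef]
      field_simp
      ring
    calc (H.inf' ⟨c0, hc0⟩ fun c => chordalSq h c)
        = H.inf' ⟨c0, hc0⟩ (fun c => g h * chordalSq (P.mulVec h) c + (1 - g h)) :=
          Finset.inf'_congr _ rfl hcongr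
      _ = g h * (H.inf' ⟨c0, hc0⟩ fun c => chordalSq (P.mulVec h) c) + (1 - g h) :=
          inf'_affine _ _ _ _ _ (hg01 h).1
  -- integrability facts
  have int_bdd : ∀ (f : (Fin N → ℂ) → ℝ), Measurable f → (∀ h, |f h| ≤ 1) → Integrable f μ := by
    intro f hm hb
    exact Integrable.mono' (integrable_const 1) hm.aestronglyMeasurable
      (Filter.Eventually.of_forall (by simpa [Real.norm_eq_abs] using hb))
  have meas_inf2 : Measurable fun h : Fin N → ℂ =>
      (H.inf' ⟨c0, hc0⟩ fun c => chordalSq (P.mulVec h) c) :=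
    meas_inf' H ⟨c0, hc0⟩ (fun c h => chordalSq (P.mulVec h) c)
      (fun c => (meas_chordal c).comp (meas_mulVec P))
  have meas_g : Measurable g := (meas_nsq.comp (meas_mulVec P)).div meas_nsq
  have inf2_bd : ∀ h : Fin N → ℂ,
      0 ≤ (H.inf' ⟨c0, hc0⟩ fun c => chordalSq (P.mulVec h) c) ∧
      (H.inf' ⟨c0, hc0⟩ fun c => chordalSq (P.mulVec h) c) ≤ 1 := fun h =>
    ⟨Finset.le_inf' _ _ fun c _ => chordalSq_nonneg _ _,
     (Finset.inf'_le _ hc0).trans (chordalSq_le_one _ _)⟩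
  have hI2 : Integrable (fun h => g h *
      (H.inf' ⟨c0, hc0⟩ fun c => chordalSq (P.mulVec h) c)) μ := by
    apply int_bdd (fun h => g h * (H.inf' ⟨c0, hc0⟩ fun c => chordalSq (P.mulVec h) c))
      (meas_g.mul meas_inf2)
    intro h
    rw [abs_of_nonneg (mul_nonneg (hg01 h).1 (inf2_bd h).1)]
    calc g h * _ ≤ 1 * 1 :=
          mul_le_mul (hg01 h).2 (inf2_bd h).2 (inf2_bd h).1 zero_le_one
      _ = 1 := one_mul 1
  have hIg : Integrable g μ := by
    apply int_bdd _ meas_g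
    intro h
    rw [abs_of_nonneg (hg01 h).1]; exact (hg01 h).2
  have hI3 : Integrable (fun h => 1 - g h) μ := (integrable_const 1).sub hIg
  -- entrywise integrability for the covariance
  have meas_entry : ∀ i j : Fin N, Measurable fun h : Fin N → ℂ =>
      h j * star (h i) / (nsq h : ℂ) := by
    intro i j
    exact ((measurable_pi_apply j).mul (continuous_star.measurable.comp (measurable_pi_apply i))).div
      (Complex.measurable_ofReal.comp meas_nsq)
  have abs_entry : ∀ (i j : Fin N) (h : Fin N → ℂ),
      ‖h j * star (h i) / (nsq h : ℂ)‖ ≤ 1 := by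
    intro i j h
    rcases eq_or_lt_of_le (nsq_nonneg h) with h0 | h0
    · rw [norm_div]
      simp [← h0]
    · rw [norm_div, norm_mul, Complex.norm_real, Real.norm_of_nonneg h0.le, div_le_one h0]
      have h1 := sq_abs_apply_le_nsq i h
      have h2 := sq_abs_apply_le_nsq j h
      have h3 : ‖star (h i)‖ = ‖h i‖ := norm_star _
      rw [h3]
      nlinarith [norm_nonneg (h i), norm_nonneg (h j)]
  have int_entry : ∀ i j : Fin N, Integrable (fun h : Fin N → ℂ =>
      h j * star (h i) / (nsq h : ℂ)) μ := by
    intro i j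
    exact Integrable.mono' (integrable_const 1) (meas_entry i j).aestronglyMeasurable
      (Filter.Eventually.of_forall fun h => by
        simpa using abs_entry i j h)
  -- trace computation
  have inner_eq : ∀ h : Fin N → ℂ,
      (∑ i, ∑ j, P i j * (h j * star (h i) / (nsq h : ℂ))) = ((g h : ℝ) : ℂ) := by
    intro h
    have e1 : (∑ i, ∑ j, P i j * (h j * star (h i) / (nsq h : ℂ)))
        = (star h ⬝ᵥ P.mulVec h) / (nsq h : ℂ) := by
      rw [dotProduct, Finset.sum_div]
      refine Finset.sum_congr rfl fun i _ => ?_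
      simp only [Matrix.mulVec, dotProduct, Pi.star_apply, Finset.mul_sum,
        Finset.sum_div]
      refine Finset.sum_congr rfl fun j _ => ?_
      ring
    rw [e1, ← dot_proj_self P hP hPP, dot_star_self, hgdef]
    rw [Complex.ofReal_div]
  have trace_eq : ((P * dirCov μ).trace).re = ∫ h, g h ∂μ := by
    have step1 : (P * dirCov μ).trace
        = ∑ i, ∑ j, P i j * (∫ h, h j * star (h i) / (nsq h : ℂ) ∂μ) := by
      simp [Matrix.trace, Matrix.mul_apply, Matrix.diag, dirCov]
    have step2 : (P * dirCov μ).trace = ∫ h, ((g h : ℝ) : ℂ) ∂μ := by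
      rw [step1]
      calc ∑ i, ∑ j, P i j * (∫ h, h j * star (h i) / (nsq h : ℂ) ∂μ)
          = ∑ i, ∫ h, ∑ j, P i j * (h j * star (h i) / (nsq h : ℂ)) ∂μ := by
            refine Finset.sum_congr rfl fun i _ => ?_
            rw [integral_finset_sum _ fun j _ => (int_entry i j).const_mul _]
            exact Finset.sum_congr rfl fun j _ => (integral_const_mul _ _).symm
        _ = ∫ h, ∑ i, ∑ j, P i j * (h j * star (h i) / (nsq h : ℂ)) ∂μ := by
            rw [integral_finset_sum _ fun i _ =>
              integrable_finset_sum _ fun j _ => (int_entry i j).const_mul (P i j)]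
        _ = ∫ h, ((g h : ℝ) : ℂ) ∂μ := by
            exact integral_congr_ae (Filter.Eventually.of_forall fun h => inner_eq h)
    rw [step2]
    have hInt : Integrable (fun h => ((g h : ℝ) : ℂ)) μ := hIg.ofReal
    rw [← RCLike.re_eq_complex_re, ← integral_re hInt]
    simp
  -- final assembly
  calc ∫ h, (H.inf' ⟨c0, hc0⟩ fun c => chordalSq h c) ∂μ
      = ∫ h, (g h * (H.inf' ⟨c0, hc0⟩ fun c => chordalSq (P.mulVec h) c) + (1 - g h)) ∂μ :=
        integral_congr_ae keyae
    _ = (∫ h, g h * (H.inf' ⟨c0, hc0⟩ fun c => chordalSq (P.mulVec h) c) ∂μ)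
        + ∫ h, (1 - g h) ∂μ := integral_add hI2 hI3
    _ = (∫ h, g h * (H.inf' ⟨c0, hc0⟩ fun c => chordalSq (P.mulVec h) c) ∂μ)
        + (1 - ((P * dirCov μ).trace).re) := by
        rw [integral_sub (integrable_const 1) hIg, trace_eq]
        simp
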